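/- Let a bicategory have bicategorical coinserters and (multiple) bicategorical coequifiers. Then it has bicategorical coinverters: given f, g : A ⇉ B and a 2-cell α : f → g, form the bicategorical coinserter (p : B → C, β : p∘g → p∘f) of the pair (g, f), then form the multiple bicategorical coequifier q : C → D of the pairs ((p∘α) ∘ β, id_{p∘g}) and (β ∘ (p∘α), id_{p∘f}); then q ∘ p : B → D, equipped with q∘(p∘α), is a bicategorical coinverter of α. -/
import Mathlib


/-!
Statement 8: In a bicategory with bicategorical coinserters and (multiple) bicategorical
coequifiers, bicategorical coinverters exist: given `f, g : a ⟶ b` and a 2-cell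
`η : f ⟶ g`, form the bicategorical coinserter `(p : b ⟶ c, β : g ≫ p ⟶ f ≫ p)` of
`(g, f)`, then the multiple bicategorical coequifier `q : c ⟶ d` of the pairs
`(β ≫ (η ▷ p), 𝟙 (g ≫ p))` and `((η ▷ p) ≫ β, 𝟙 (f ≫ p))`; then `p ≫ q` is a
bicategorical coinverter of `η`.
-/

open CategoryTheory Bicategory

universe w v u

variable {B : Type u} [Bicategory.{w, v} B]

/-- `(p, α)` is a bicategorical coinserter of `f, g : a ⟶ b`: for every `t`,
precomposition induces an equivalence between `Hom(c,t)` and the category of pairs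
`(q : b ⟶ t, β : f ≫ q ⟶ g ≫ q)`. -/
def IsBicatCoinserter {a b c : B} (f g : a ⟶ b) (p : b ⟶ c) (α : f ≫ p ⟶ g ≫ p) : Prop :=
  ∀ t : B,
    (∀ (q : b ⟶ t) (β : f ≫ q ⟶ g ≫ q),
      ∃ (k : c ⟶ t) (e : p ≫ k ≅ q),
        β = f ◁ e.inv ≫ (α_ f p k).inv ≫ α ▷ k ≫ (α_ g p k).hom ≫ g ◁ e.hom) ∧
    (∀ (k l : c ⟶ t) (θ : p ≫ k ⟶ p ≫ l),
      ((α_ f p k).inv ≫ α ▷ k ≫ (α_ g p k).hom) ≫ g ◁ θ =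
        f ◁ θ ≫ ((α_ f p l).inv ≫ α ▷ l ≫ (α_ g p l).hom) →
      ∃! π : k ⟶ l, p ◁ π = θ)

/-- `q` is a multiple bicategorical coequifier of the two parallel pairs of 2-cells
`(φ₁, ψ₁)` and `(φ₂, ψ₂)` with common target `b`. -/
def IsBicatCoequifierPair {a₁ a₂ b c : B} {f₁ g₁ : a₁ ⟶ b} (φ₁ ψ₁ : f₁ ⟶ g₁)
    {f₂ g₂ : a₂ ⟶ b} (φ₂ ψ₂ : f₂ ⟶ g₂) (q : b ⟶ c) : Prop :=
  φ₁ ▷ q = ψ₁ ▷ q ∧ φ₂ ▷ q = ψ₂ ▷ q ∧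
  ∀ t : B,
    (∀ r : b ⟶ t, φ₁ ▷ r = ψ₁ ▷ r → φ₂ ▷ r = ψ₂ ▷ r →
      ∃ k : c ⟶ t, Nonempty (q ≫ k ≅ r)) ∧
    (∀ (k l : c ⟶ t) (θ : q ≫ k ⟶ q ≫ l), ∃! π : k ⟶ l, q ◁ π = θ)

/-- `p` is a bicategorical coinverter of the 2-cell `η : f ⟶ g`: `η ▷ p` is invertible
and `p` is universal with this property. -/
def IsBicatCoinverter {a b c : B} {f g : a ⟶ b} (η : f ⟶ g) (p : b ⟶ c) : Prop :=
  IsIso (η ▷ p) ∧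
  ∀ t : B,
    (∀ r : b ⟶ t, IsIso (η ▷ r) → ∃ k : c ⟶ t, Nonempty (p ≫ k ≅ r)) ∧
    (∀ (k l : c ⟶ t) (θ : p ≫ k ⟶ p ≫ l), ∃! π : k ⟶ l, p ◁ π = θ)

/-- coinverters from coinserters and coequifiers, by the explicit two-step
construction. -/
theorem bicat_coinverter_of_coinserter_and_coequifier
    {a b c d : B} {f g : a ⟶ b} (η : f ⟶ g) (p : b ⟶ c) (β : g ≫ p ⟶ f ≫ p)
    (hins : IsBicatCoinserter g f p β) (q : c ⟶ d)
    (hequi : IsBicatCoequifierPair (β ≫ η ▷ p) (𝟙 (g ≫ p)) (η ▷ p ≫ β) (𝟙 (f ≫ p)) q) :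
    IsBicatCoinverter η (p ≫ q) := by
  obtain ⟨h1, h2, hco⟩ := hequi
  have hβq : β ▷ q ≫ (η ▷ p) ▷ q = 𝟙 ((g ≫ p) ≫ q) := by simpa using h1
  have hqβ : (η ▷ p) ▷ q ≫ β ▷ q = 𝟙 ((f ≫ p) ≫ q) := by simpa using h2
  haveI hiso : IsIso ((η ▷ p) ▷ q) := ⟨β ▷ q, hqβ, hβq⟩
  constructor
  · rw [Bicategory.whiskerRight_comp]
    infer_instance
  intro t
  constructor
  · rintro r hr
    obtain ⟨k, e, he⟩ := (hins t).1 r (inv (η ▷ r))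
    have hβk : β ▷ k =
        (α_ g p k).hom ≫ g ◁ e.hom ≫ inv (η ▷ r) ≫ f ◁ e.inv ≫ (α_ f p k).inv := by
      rw [he]; simp
    have hηpk : (η ▷ p) ▷ k =
        (α_ f p k).hom ≫ f ◁ e.hom ≫ η ▷ r ≫ g ◁ e.inv ≫ (α_ g p k).inv := by
      have h3 : η ▷ (p ≫ k) = f ◁ e.hom ≫ η ▷ r ≫ g ◁ e.inv := by
        rw [← Category.assoc, whisker_exchange]; simp
      have h4 : (α_ f p k).inv ≫ (η ▷ p) ▷ k ≫ (α_ g p k).hom =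
          f ◁ e.hom ≫ η ▷ r ≫ g ◁ e.inv := by
        rw [← h3, Bicategory.whiskerRight_comp]
      calc (η ▷ p) ▷ k
          = (α_ f p k).hom ≫ ((α_ f p k).inv ≫ (η ▷ p) ▷ k ≫ (α_ g p k).hom) ≫
              (α_ g p k).inv := by simp
        _ = (α_ f p k).hom ≫ (f ◁ e.hom ≫ η ▷ r ≫ g ◁ e.inv) ≫ (α_ g p k).inv := by
            rw [h4]
        _ = (α_ f p k).hom ≫ f ◁ e.hom ≫ η ▷ r ≫ g ◁ e.inv ≫ (α_ g p k).inv := by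
            simp
    have c1 : (β ≫ η ▷ p) ▷ k = 𝟙 (g ≫ p) ▷ k := by
      simp [comp_whiskerRight, hβk, hηpk]
    have c2 : (η ▷ p ≫ β) ▷ k = 𝟙 (f ≫ p) ▷ k := by
      simp [comp_whiskerRight, hβk, hηpk]
    obtain ⟨k', ⟨e'⟩⟩ := (hco t).1 k c1 c2
    exact ⟨k', ⟨α_ p q k' ≪≫ whiskerLeftIso p e' ≪≫ e⟩⟩
  · intro k l θ
    set θ' : p ≫ q ≫ k ⟶ p ≫ q ≫ l := (α_ p q k).inv ≫ θ ≫ (α_ p q l).hom with hθ'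
    have hβm : ∀ (m : d ⟶ t), β ▷ (q ≫ m) =
        (α_ (g ≫ p) q m).inv ≫ (β ▷ q) ▷ m ≫ (α_ (f ≫ p) q m).hom := by
      intro m; rw [Bicategory.whiskerRight_comp]
    have hηm : ∀ (m : d ⟶ t), η ▷ (p ≫ q ≫ m) =
        (α_ f p (q ≫ m)).inv ≫ ((α_ (f ≫ p) q m).inv ≫ ((η ▷ p) ▷ q) ▷ m ≫
          (α_ (g ≫ p) q m).hom) ≫ (α_ g p (q ≫ m)).hom := by
      intro m; rw [Bicategory.whiskerRight_comp, Bicategory.whiskerRight_comp]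
    have hinv1 : ∀ (m : d ⟶ t),
        ((α_ g p (q ≫ m)).inv ≫ β ▷ (q ≫ m) ≫ (α_ f p (q ≫ m)).hom) ≫
          η ▷ (p ≫ q ≫ m) = 𝟙 _ := by
      intro m
      have hmm : (β ▷ q) ▷ m ≫ ((η ▷ p) ▷ q) ▷ m = 𝟙 _ := by
        rw [← comp_whiskerRight, hβq, id_whiskerRight]
      rw [hβm, hηm]
      simp [reassoc_of% hmm]
    have hinv2 : ∀ (m : d ⟶ t),
        η ▷ (p ≫ q ≫ m) ≫
          ((α_ g p (q ≫ m)).inv ≫ β ▷ (q ≫ m) ≫ (α_ f p (q ≫ m)).hom) = 𝟙 _ := by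
      intro m
      have hmm : ((η ▷ p) ▷ q) ▷ m ≫ (β ▷ q) ▷ m = 𝟙 _ := by
        rw [← comp_whiskerRight, hqβ, id_whiskerRight]
      rw [hβm, hηm]
      simp [reassoc_of% hmm]
    haveI i_k : IsIso (η ▷ (p ≫ q ≫ k)) := ⟨_, hinv2 k, hinv1 k⟩
    haveI i_l : IsIso (η ▷ (p ≫ q ≫ l)) := ⟨_, hinv2 l, hinv1 l⟩
    have e_k : (α_ g p (q ≫ k)).inv ≫ β ▷ (q ≫ k) ≫ (α_ f p (q ≫ k)).hom =
        inv (η ▷ (p ≫ q ≫ k)) := IsIso.eq_inv_of_hom_inv_id (hinv2 k)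
    have e_l : (α_ g p (q ≫ l)).inv ≫ β ▷ (q ≫ l) ≫ (α_ f p (q ≫ l)).hom =
        inv (η ▷ (p ≫ q ≫ l)) := IsIso.eq_inv_of_hom_inv_id (hinv2 l)
    have compat : ((α_ g p (q ≫ k)).inv ≫ β ▷ (q ≫ k) ≫ (α_ f p (q ≫ k)).hom) ≫ f ◁ θ' =
        g ◁ θ' ≫ ((α_ g p (q ≫ l)).inv ≫ β ▷ (q ≫ l) ≫ (α_ f p (q ≫ l)).hom) := by
      rw [e_k, e_l, IsIso.inv_comp_eq, ← Category.assoc, IsIso.eq_comp_inv]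
      exact whisker_exchange η θ'
    obtain ⟨σ, hσ, hσu⟩ := (hins t).2 (q ≫ k) (q ≫ l) θ' compat
    obtain ⟨π, hπ, hπu⟩ := (hco t).2 k l σ
    refine ⟨π, ?_, ?_⟩
    · show (p ≫ q) ◁ π = θ
      rw [comp_whiskerLeft, hπ, hσ, hθ']
      simp
    · intro π' hπ'
      replace hπ' : (p ≫ q) ◁ π' = θ := hπ'
      apply hπu
      apply hσu
      show p ◁ q ◁ π' = θ' 
      rw [hθ', ← hπ', comp_whiskerLeft]
      simp
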